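/- For every R̂ ≥ 0, the infimum of Δ_{1/2}(P) over all probability distributions P on 𝒳×𝒳 satisfying D(P‖Q×Q) ≤ 2R̂ equals sup_{ρ>0} [E_x(ρ,Q) − 2ρR̂]. -/

import Mathlib

open Real Filter Finset Topology

section Abstract
variable {α : Type*} [Fintype α] [Nonempty α]

omit [Nonempty α] in
lemma kl_nonneg (P q : α → ℝ) (hP0 : ∀ a, 0 ≤ P a) (hP1 : ∑ a, P a = 1)
    (hq0 : ∀ a, 0 < q a) (hq1 : ∑ a, q a ≤ 1) :
    0 ≤ ∑ a, P a * Real.log (P a / q a) := by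
  have key : ∀ a, -(P a * Real.log (P a / q a)) ≤ q a - P a := by
    intro a
    rcases eq_or_lt_of_le (hP0 a) with h | h
    · simp [← h]; exact (hq0 a).le
    · have hx : 0 < q a / P a := div_pos (hq0 a) h
      have hlog : Real.log (q a / P a) ≤ q a / P a - 1 := Real.log_le_sub_one_of_pos hx
      have hflip : Real.log (q a / P a) = -Real.log (P a / q a) := by
        rw [Real.log_div (hq0 a).ne' h.ne', Real.log_div h.ne' (hq0 a).ne']; ring
      have := mul_le_mul_of_nonneg_left hlog (hP0 a)
      rw [hflip] at this
      calc -(P a * Real.log (P a / q a)) = P a * -Real.log (P a / q a) := by ring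
        _ ≤ P a * (q a / P a - 1) := this
        _ = q a - P a := by field_simp
  have hsum : -∑ a, P a * Real.log (P a / q a) ≤ 0 := by
    rw [← Finset.sum_neg_distrib]
    calc ∑ a, -(P a * Real.log (P a / q a)) ≤ ∑ a, (q a - P a) :=
          Finset.sum_le_sum (fun a _ => key a)
      _ = (∑ a, q a) - 1 := by rw [Finset.sum_sub_distrib, hP1]
      _ ≤ 0 := by linarith
  linarith

lemma duality (w Z : α → ℝ) (hw : ∀ a, 0 < w a) (hw1 : ∑ a, w a = 1)
    (hZ0 : ∀ a, 0 < Z a) (hZ1 : ∀ a, Z a ≤ 1) (B : ℝ) (hB : 0 ≤ B) :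
    sInf {v | ∃ P : α → ℝ, ((∀ a, 0 ≤ P a) ∧ ∑ a, P a = 1) ∧
        (∑ a, P a * Real.log (P a / w a)) ≤ B ∧ v = ∑ a, P a * (-Real.log (Z a))} =
    sSup {v | ∃ ρ : ℝ, 0 < ρ ∧
        v = -ρ * Real.log (∑ a, w a * Z a ^ (1/ρ)) - ρ * B} := by
  set L : α → ℝ := fun a => Real.log (Z a) with hLdef
  have hL : ∀ a, L a ≤ 0 := fun a => Real.log_nonpos (hZ0 a).le (hZ1 a)
  set G : ℝ → ℝ := fun t => ∑ a, w a * Real.exp (t * L a) with hGdef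
  have hG0 : ∀ t, 0 < G t := by
    intro t
    exact Finset.sum_pos (fun a _ => mul_pos (hw a) (Real.exp_pos _)) Finset.univ_nonempty
  have hGzero : G 0 = 1 := by simp [hGdef, hw1]
  have hGS : ∀ ρ : ℝ, (∑ a, w a * Z a ^ (1/ρ)) = G (1/ρ) := by
    intro ρ
    refine Finset.sum_congr rfl (fun a _ => ?_)
    rw [Real.rpow_def_of_pos (hZ0 a), mul_comm (Real.log (Z a))]
  set q : ℝ → α → ℝ := fun ρ a => w a * Real.exp ((1/ρ) * L a) / G (1/ρ) with hqdef
  have hq0 : ∀ ρ a, 0 < q ρ a := fun ρ a =>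
    div_pos (mul_pos (hw a) (Real.exp_pos _)) (hG0 _)
  have hq1 : ∀ ρ, ∑ a, q ρ a = 1 := by
    intro ρ
    rw [← Finset.sum_div]
    exact div_self (hG0 (1/ρ)).ne'
  -- the master pointwise identity, summed
  have ID : ∀ (P : α → ℝ), (∀ a, 0 ≤ P a) → ∀ ρ : ℝ,
      ∑ a, P a * Real.log (P a / q ρ a) =
        (∑ a, P a * Real.log (P a / w a)) - (1/ρ) * (∑ a, P a * L a)
          + (∑ a, P a) * Real.log (G (1/ρ)) := by
    intro P hP0 ρ
    have point : ∀ a, P a * Real.log (P a / q ρ a) =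
        P a * Real.log (P a / w a) - (1/ρ) * (P a * L a) + P a * Real.log (G (1/ρ)) := by
      intro a
      rcases eq_or_lt_of_le (hP0 a) with h | h
      · simp [← h]
      · have hwa := (hw a).ne'
        have hea := (Real.exp_pos ((1/ρ) * L a)).ne'
        have hGa := (hG0 (1/ρ)).ne'
        have hq : q ρ a = w a * Real.exp ((1/ρ) * L a) / G (1/ρ) := rfl
        rw [hq, Real.log_div h.ne' (div_ne_zero (mul_ne_zero hwa hea) hGa),
          Real.log_div (mul_ne_zero hwa hea) hGa, Real.log_mul hwa hea, Real.log_exp,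
          Real.log_div h.ne' hwa]
        ring
    rw [Finset.sum_congr rfl (fun a _ => point a), Finset.sum_add_distrib,
      Finset.sum_sub_distrib, ← Finset.mul_sum, ← Finset.sum_mul]
  have negsum : ∀ (P : α → ℝ), (∑ a, P a * (-Real.log (Z a))) = -∑ a, P a * L a := by
    intro P
    rw [← Finset.sum_neg_distrib]
    exact Finset.sum_congr rfl (fun a _ => by rw [hLdef]; ring)
  -- weak duality
  have weakdual : ∀ ρ : ℝ, 0 < ρ → ∀ P : α → ℝ, (∀ a, 0 ≤ P a) → ∑ a, P a = 1 →
      (∑ a, P a * Real.log (P a / w a)) ≤ B →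
      -ρ * Real.log (G (1/ρ)) - ρ * B ≤ ∑ a, P a * (-Real.log (Z a)) := by
    intro ρ hρ P hP0 hP1 hPD
    have h0 := kl_nonneg P (q ρ) hP0 hP1 (hq0 ρ) (hq1 ρ).le
    rw [ID P hP0 ρ, hP1, one_mul] at h0
    rw [negsum]
    set S := ∑ a, P a * L a
    set lg := Real.log (G (1/ρ))
    have h3 : (1/ρ) * S ≤ B + lg := by linarith
    have h4 := mul_le_mul_of_nonneg_left h3 hρ.le
    rw [show ρ * ((1/ρ) * S) = S by field_simp] at h4
    linarith
  set Hfun : ℝ → ℝ := fun t =>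
    t * (∑ a, w a * Real.exp (t * L a) * L a) / G t - Real.log (G t) with hHdef
  have hGcont : Continuous G := by
    apply continuous_finset_sum
    intro a _
    exact continuous_const.mul ((continuous_id.mul continuous_const).rexp)
  have hHcont : Continuous Hfun := by
    apply Continuous.sub
    · apply Continuous.div
      · apply continuous_id.mul
        apply continuous_finset_sum
        intro a _
        exact (continuous_const.mul ((continuous_id.mul continuous_const).rexp)).mul
          continuous_const
      · exact hGcont
      · exact fun t => (hG0 t).ne'
    · exact hGcont.log (fun t => (hG0 t).ne')
  set h : ℝ → ℝ := fun ρ => Hfun (1/ρ) with hhdef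
  -- Gibbs identity : relative entropy of the tilted distribution
  have gibbs : ∀ ρ : ℝ, (∑ a, q ρ a * Real.log (q ρ a / w a)) = h ρ := by
    intro ρ
    have h0 := ID (q ρ) (fun a => (hq0 ρ a).le) ρ
    have hz : ∑ a, q ρ a * Real.log (q ρ a / q ρ a) = 0 := by
      refine Finset.sum_eq_zero (fun a _ => ?_)
      rw [div_self (hq0 ρ a).ne']; simp
    rw [hz, hq1 ρ, one_mul] at h0
    have hqL : ∑ a, q ρ a * L a = (∑ a, w a * Real.exp ((1/ρ) * L a) * L a) / G (1/ρ) := by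
      rw [Finset.sum_div]
      exact Finset.sum_congr rfl (fun a _ => by rw [hqdef]; ring)
    have hthis : (∑ a, q ρ a * Real.log (q ρ a / w a)) =
        (1/ρ) * (∑ a, q ρ a * L a) - Real.log (G (1/ρ)) := by linarith
    rw [hthis, hqL, hhdef, hHdef]
    ring
  -- value of Δ at the tilted distribution
  have keyrel : ∀ ρ : ℝ, 0 < ρ →
      (∑ a, q ρ a * (-Real.log (Z a))) = -ρ * Real.log (G (1/ρ)) - ρ * h ρ := by
    intro ρ hρ
    have h0 := ID (q ρ) (fun a => (hq0 ρ a).le) ρ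
    have hz : ∑ a, q ρ a * Real.log (q ρ a / q ρ a) = 0 := by
      refine Finset.sum_eq_zero (fun a _ => ?_)
      rw [div_self (hq0 ρ a).ne']; simp
    rw [hz, hq1 ρ, one_mul] at h0
    have hg := gibbs ρ
    rw [negsum]
    have hρne : ρ ≠ 0 := hρ.ne'
    have hh : (1/ρ) * (∑ a, q ρ a * L a) = h ρ + Real.log (G (1/ρ)) := by linarith
    have h5 := congrArg (fun x => ρ * x) hh
    rw [show ρ * ((1/ρ) * (∑ a, q ρ a * L a)) = ∑ a, q ρ a * L a by field_simp] at h5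
    linarith
  have lim_inv : Tendsto (fun ρ : ℝ => 1/ρ) atTop (𝓝 0) := by
    simpa only [one_div] using tendsto_inv_atTop_zero
  -- limit of h at infinity
  have lim_h_top : Tendsto h atTop (𝓝 0) := by
    have hcomp := (hHcont.tendsto 0).comp lim_inv
    have hH0 : Hfun 0 = 0 := by simp [hHdef, hGzero]
    rw [hH0] at hcomp
    exact hcomp
  -- limit of Ex at infinity
  have lim_Ex_top : Tendsto (fun ρ : ℝ => -ρ * Real.log (G (1/ρ))) atTop
      (𝓝 (∑ a, w a * (-Real.log (Z a)))) := by
    have hd : HasDerivAt (fun t => Real.log (G t)) (∑ a, w a * L a) 0 := by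
      have hdG : HasDerivAt G (∑ a, w a * L a) 0 := by
        have hsum : HasDerivAt G (∑ a, w a * (Real.exp ((0:ℝ) * L a) * (1 * L a))) 0 :=
          HasDerivAt.fun_sum (fun a _ =>
            (((hasDerivAt_id (0:ℝ)).mul_const (L a)).exp).const_mul (w a))
        simpa using hsum
      have hlog := hdG.log (hG0 0).ne'
      rw [hGzero] at hlog
      simpa using hlog
    have hslope := hasDerivAt_iff_tendsto_slope.mp hd
    have hphi0 : Real.log (G 0) = 0 := by rw [hGzero]; simp
    have hslope' : Tendsto (fun t : ℝ => Real.log (G t) / t) (𝓝[≠] 0)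
        (𝓝 (∑ a, w a * L a)) := by
      apply hslope.congr'
      filter_upwards [self_mem_nhdsWithin] with t ht
      simp [slope, hphi0, div_eq_inv_mul]
    have hmap : Tendsto (fun ρ : ℝ => 1/ρ) atTop (𝓝[≠] (0:ℝ)) := by
      rw [tendsto_nhdsWithin_iff]
      refine ⟨lim_inv, ?_⟩
      filter_upwards [eventually_gt_atTop (0:ℝ)] with ρ hρ
      exact (one_div_pos.mpr hρ).ne'
    have hcomp := hslope'.comp hmap
    have hneg : Tendsto (fun ρ : ℝ => -(Real.log (G (1/ρ)) / (1/ρ))) atTop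
        (𝓝 (-(∑ a, w a * L a))) := hcomp.neg
    rw [negsum]
    have heq : ∀ᶠ ρ : ℝ in atTop, -(Real.log (G (1/ρ)) / (1/ρ)) = -ρ * Real.log (G (1/ρ)) := by
      filter_upwards [eventually_gt_atTop (0:ℝ)] with ρ hρ
      field_simp
    exact hneg.congr' heq
  -- max of L and limits at 0+
  obtain ⟨a₀, -, ha₀⟩ := Finset.exists_max_image (Finset.univ : Finset α) L Finset.univ_nonempty
  set Lm : ℝ := L a₀ with hLm
  have hLmle : ∀ a, L a ≤ Lm := fun a => ha₀ a (Finset.mem_univ a)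
  set A : Finset α := Finset.univ.filter (fun a => L a = Lm) with hA
  set μA : ℝ := ∑ a ∈ A, w a with hμA
  have hμA0 : 0 < μA :=
    Finset.sum_pos (fun a _ => hw a) ⟨a₀, Finset.mem_filter.mpr ⟨Finset.mem_univ _, rfl⟩⟩
  set T : ℝ → ℝ := fun t => ∑ a, w a * Real.exp (t * (L a - Lm)) with hT
  have hexp : ∀ (t : ℝ) (a : α),
      Real.exp (t * L a) = Real.exp (t * Lm) * Real.exp (t * (L a - Lm)) := by
    intro t a; rw [← Real.exp_add]; ring_nf
  have hGT : ∀ t, G t = Real.exp (t * Lm) * T t := by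
    intro t
    rw [hT, Finset.mul_sum]
    exact Finset.sum_congr rfl (fun a _ => by rw [hexp t a]; ring)
  have hT0 : ∀ t, 0 < T t :=
    fun t => Finset.sum_pos (fun a _ => mul_pos (hw a) (Real.exp_pos _)) Finset.univ_nonempty
  have hTub : ∀ t : ℝ, 0 ≤ t → T t ≤ 1 := by
    intro t ht
    rw [← hw1]
    refine Finset.sum_le_sum (fun a _ => ?_)
    have h1 : Real.exp (t * (L a - Lm)) ≤ 1 := by
      rw [Real.exp_le_one_iff]
      exact mul_nonpos_of_nonneg_of_nonpos ht (by linarith [hLmle a])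
    calc w a * Real.exp (t * (L a - Lm)) ≤ w a * 1 :=
          mul_le_mul_of_nonneg_left h1 (hw a).le
      _ = w a := mul_one _
  have hTlb : ∀ t : ℝ, μA ≤ T t := by
    intro t
    have : μA = ∑ a ∈ A, w a * Real.exp (t * (L a - Lm)) := by
      refine Finset.sum_congr rfl (fun a ha => ?_)
      have : L a = Lm := (Finset.mem_filter.mp ha).2
      rw [this]; simp
    rw [this, hT]
    exact Finset.sum_le_sum_of_subset_of_nonneg (Finset.subset_univ A)
      (fun a _ _ => (mul_pos (hw a) (Real.exp_pos _)).le)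
  -- limits of T and N at +∞
  have term_lim : ∀ (c : α → ℝ), Tendsto (fun t => ∑ a, w a * Real.exp (t * (L a - Lm)) * c a)
      atTop (𝓝 (∑ a ∈ A, w a * c a)) := by
    intro c
    have : (∑ a ∈ A, w a * c a) = ∑ a, (if L a = Lm then w a * c a else 0) := by
      rw [Finset.sum_filter]
    rw [this]
    apply tendsto_finset_sum
    intro a _
    by_cases hLa : L a = Lm
    · simp only [hLa, sub_self, mul_zero, Real.exp_zero, mul_one, if_pos]
      exact tendsto_const_nhds
    · simp only [if_neg hLa]
      have hneg : L a - Lm < 0 := sub_neg.mpr (lt_of_le_of_ne (hLmle a) hLa)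
      have h1 : Tendsto (fun t : ℝ => t * (L a - Lm)) atTop atBot :=
        tendsto_id.atTop_mul_const_of_neg hneg
      have h2 : Tendsto (fun t : ℝ => Real.exp (t * (L a - Lm))) atTop (𝓝 0) :=
        Real.tendsto_exp_atBot.comp h1
      have := (h2.const_mul (w a)).mul_const (c a)
      simpa using this
  have lim_T : Tendsto T atTop (𝓝 μA) := by
    have := term_lim (fun _ => 1)
    simpa [hμA] using this
  have lim_inv0 : Tendsto (fun ρ : ℝ => 1/ρ) (𝓝[>] 0) atTop := by
    simpa only [one_div] using tendsto_inv_nhdsGT_zero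
  have ev_pos : ∀ᶠ ρ : ℝ in 𝓝[>] (0:ℝ), 0 < ρ := self_mem_nhdsWithin
  -- lim Ex at 0+
  have lim_Ex0 : Tendsto (fun ρ : ℝ => -ρ * Real.log (G (1/ρ)) - ρ * B) (𝓝[>] 0)
      (𝓝 (-Lm)) := by
    have hlogG : ∀ ρ : ℝ, 0 < ρ →
        -ρ * Real.log (G (1/ρ)) - ρ * B = -Lm - ρ * Real.log (T (1/ρ)) - ρ * B := by
      intro ρ hρ
      rw [hGT (1/ρ), Real.log_mul (Real.exp_pos _).ne' (hT0 _).ne', Real.log_exp]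
      field_simp
      ring
    have hsq : Tendsto (fun ρ : ℝ => ρ * Real.log (T (1/ρ))) (𝓝[>] 0) (𝓝 0) := by
      have hlow : Tendsto (fun ρ : ℝ => ρ * Real.log μA) (𝓝[>] 0) (𝓝 0) := by
        have : Tendsto (fun ρ : ℝ => ρ * Real.log μA) (𝓝 0) (𝓝 (0 * Real.log μA)) :=
          (continuous_id.mul continuous_const).tendsto 0
        simpa using this.mono_left nhdsWithin_le_nhds
      refine tendsto_of_tendsto_of_tendsto_of_le_of_le' hlow tendsto_const_nhds ?_ ?_
      · filter_upwards [ev_pos] with ρ hρ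
        exact mul_le_mul_of_nonneg_left (Real.log_le_log hμA0 (hTlb (1/ρ))) hρ.le
      · filter_upwards [ev_pos] with ρ hρ
        exact mul_nonpos_of_nonneg_of_nonpos hρ.le
          (Real.log_nonpos (hT0 _).le (hTub _ (by positivity)))
    have hmain : Tendsto (fun ρ : ℝ => -Lm - ρ * Real.log (T (1/ρ)) - ρ * B) (𝓝[>] 0)
        (𝓝 (-Lm)) := by
      have hB' : Tendsto (fun ρ : ℝ => ρ * B) (𝓝[>] 0) (𝓝 0) := by
        have : Tendsto (fun ρ : ℝ => ρ * B) (𝓝 0) (𝓝 (0 * B)) :=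
          (continuous_id.mul continuous_const).tendsto 0
        simpa using this.mono_left nhdsWithin_le_nhds
      have := (tendsto_const_nhds (x := -Lm) (f := 𝓝[>] (0:ℝ))).sub hsq |>.sub hB'
      simpa using this
    refine hmain.congr' ?_
    filter_upwards [ev_pos] with ρ hρ
    exact (hlogG ρ hρ).symm
  -- lim Δ(q ρ) at 0+
  have lim_Δ0 : Tendsto (fun ρ : ℝ => ∑ a, q ρ a * (-Real.log (Z a))) (𝓝[>] 0)
      (𝓝 (-Lm)) := by
    set N : ℝ → ℝ := fun t => ∑ a, w a * Real.exp (t * (L a - Lm)) * L a with hN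
    have lim_N : Tendsto N atTop (𝓝 (μA * Lm)) := by
      have := term_lim L
      have hsum : (∑ a ∈ A, w a * L a) = μA * Lm := by
        rw [hμA, Finset.sum_mul]
        refine Finset.sum_congr rfl (fun a ha => ?_)
        rw [(Finset.mem_filter.mp ha).2]
      rwa [hsum] at this
    have hid : ∀ ρ : ℝ, (∑ a, q ρ a * (-Real.log (Z a))) = -(N (1/ρ) / T (1/ρ)) := by
      intro ρ
      have point : ∀ a, q ρ a * (-Real.log (Z a)) =
          -(w a * Real.exp ((1/ρ) * (L a - Lm)) * L a / T (1/ρ)) := by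
        intro a
        have : q ρ a = w a * Real.exp ((1/ρ) * L a) / G (1/ρ) := rfl
        rw [this, hGT (1/ρ), hexp (1/ρ) a]
        have hE := (Real.exp_pos ((1/ρ) * Lm)).ne'
        have hTn := (hT0 (1/ρ)).ne'
        field_simp
        ring
      rw [Finset.sum_congr rfl (fun a _ => point a), Finset.sum_neg_distrib, ← Finset.sum_div]
    have hdiv : Tendsto (fun t => -(N t / T t)) atTop (𝓝 (-Lm)) := by
      have := (lim_N.div lim_T hμA0.ne').neg
      have heq : -(μA * Lm / μA) = -Lm := by
        rw [mul_comm, mul_div_assoc, div_self hμA0.ne', mul_one]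
      rwa [heq] at this
    have := hdiv.comp lim_inv0
    refine this.congr' ?_
    filter_upwards with ρ
    exact (hid ρ).symm

  -- set bookkeeping
  set SI := {v | ∃ P : α → ℝ, ((∀ a, 0 ≤ P a) ∧ ∑ a, P a = 1) ∧
      (∑ a, P a * Real.log (P a / w a)) ≤ B ∧ v = ∑ a, P a * (-Real.log (Z a))} with hSI
  set SS := {v | ∃ ρ : ℝ, 0 < ρ ∧
      v = -ρ * Real.log (∑ a, w a * Z a ^ (1/ρ)) - ρ * B} with hSS
  have hwfeas : (∑ a, w a * (-Real.log (Z a))) ∈ SI := by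
    refine ⟨w, ⟨fun a => (hw a).le, hw1⟩, ?_, rfl⟩
    have : ∀ a, w a * Real.log (w a / w a) = 0 := by
      intro a; rw [div_self (hw a).ne']; simp
    simp only [this, Finset.sum_const_zero]; exact hB
  have hSIne : SI.Nonempty := ⟨_, hwfeas⟩
  have hSSne : SS.Nonempty := ⟨_, ⟨1, one_pos, rfl⟩⟩
  have hub : ∀ v ∈ SS, ∀ u ∈ SI, v ≤ u := by
    rintro v ⟨ρ, hρ, rfl⟩ u ⟨P, ⟨hP0, hP1⟩, hPD, rfl⟩
    rw [hGS]
    exact weakdual ρ hρ P hP0 hP1 hPD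
  have hbddS : BddAbove SS := ⟨_, fun v hv => hub v hv _ hwfeas⟩
  have hbddI : BddBelow SI := by
    refine ⟨0, fun v hv => ?_⟩
    obtain ⟨P, ⟨hP0, hP1⟩, -, rfl⟩ := hv
    exact Finset.sum_nonneg fun a _ => mul_nonneg (hP0 a)
      (neg_nonneg.mpr (Real.log_nonpos (hZ0 a).le (hZ1 a)))
  have hqfeas : ∀ ρ : ℝ, 0 < ρ → h ρ ≤ B → (∑ a, q ρ a * (-Real.log (Z a))) ∈ SI := by
    intro ρ hρ hhρ
    exact ⟨q ρ, ⟨fun a => (hq0 ρ a).le, hq1 ρ⟩, by rw [gibbs ρ]; exact hhρ, rfl⟩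
  refine le_antisymm ?_ (csSup_le hSSne (fun v hv => le_csInf hSIne (hub v hv)))
  rcases eq_or_lt_of_le hB with hB0 | hB0
  · -- B = 0
    have hlim : Tendsto (fun ρ : ℝ => -ρ * Real.log (G (1/ρ)) - ρ * B) atTop
        (𝓝 (∑ a, w a * (-Real.log (Z a)))) := by
      refine lim_Ex_top.congr (fun ρ => ?_)
      rw [← hB0]; ring
    have hle : (∑ a, w a * (-Real.log (Z a))) ≤ sSup SS := by
      refine le_of_tendsto hlim ?_
      filter_upwards [eventually_gt_atTop (0:ℝ)] with ρ hρ
      exact le_csSup hbddS ⟨ρ, hρ, by rw [hGS]⟩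
    exact le_trans (csInf_le hbddI hwfeas) hle
  · by_cases hex : ∃ ρ : ℝ, 0 < ρ ∧ B ≤ h ρ
    · -- IVT case
      obtain ⟨ρ₀, hρ₀, hBh⟩ := hex
      obtain ⟨ρ₂, hh₂, hρ₀₂⟩ :=
        ((lim_h_top.eventually_lt_const hB0).and (eventually_ge_atTop ρ₀)).exists
      have hcont : ContinuousOn h (Set.Icc ρ₀ ρ₂) := by
        apply hHcont.comp_continuousOn
        apply ContinuousOn.div continuousOn_const continuousOn_id
        intro x hx
        exact (lt_of_lt_of_le hρ₀ hx.1).ne'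
      have hmemB : B ∈ Set.Icc (h ρ₂) (h ρ₀) := ⟨hh₂.le, hBh⟩
      obtain ⟨ρs, hρsmem, hρseq⟩ := intermediate_value_Icc' hρ₀₂ hcont hmemB
      have hρs0 : 0 < ρs := lt_of_lt_of_le hρ₀ hρsmem.1
      have h1 : sInf SI ≤ ∑ a, q ρs a * (-Real.log (Z a)) :=
        csInf_le hbddI (hqfeas ρs hρs0 (le_of_eq hρseq))
      have h2 : (∑ a, q ρs a * (-Real.log (Z a))) ≤ sSup SS := by
        refine le_csSup hbddS ⟨ρs, hρs0, ?_⟩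
        rw [hGS, keyrel ρs hρs0, hρseq]
      exact le_trans h1 h2
    · -- h ρ < B for all ρ > 0
      push_neg at hex
      have h1 : sInf SI ≤ -Lm := by
        refine ge_of_tendsto lim_Δ0 ?_
        filter_upwards [self_mem_nhdsWithin] with ρ hρ
        exact csInf_le hbddI (hqfeas ρ hρ (hex ρ hρ).le)
      have h2 : -Lm ≤ sSup SS := by
        refine le_of_tendsto lim_Ex0 ?_
        filter_upwards [self_mem_nhdsWithin] with ρ hρ
        exact le_csSup hbddS ⟨ρ, hρ, by rw [hGS]⟩
      exact le_trans h1 h2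
end Abstract

/-- For every `R̂ ≥ 0`, the infimum of `Δ_{1/2}(P)` over probability
distributions `P` on `𝒳 × 𝒳` with `D(P‖Q×Q) ≤ 2R̂` equals
`sup_{ρ>0} [E_x(ρ,Q) − 2ρR̂]`. -/
theorem stmt_6 {X Y : Type*} [Fintype X] [Fintype Y] [Nonempty X] [Nonempty Y]
    (W : X → Y → ℝ) (hWpos : ∀ x y, 0 < W x y) (hWsum : ∀ x, ∑ y, W x y = 1)
    (Q : X → ℝ) (hQpos : ∀ x, 0 < Q x) (hQsum : ∑ x, Q x = 1)
    (Rh : ℝ) (hRh : 0 ≤ Rh) :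
    let Z : X → X → ℝ := fun x x' => ∑ y, Real.sqrt (W x y * W x' y)
    let Δhalf : (X × X → ℝ) → ℝ := fun P => ∑ p : X × X, P p * (-Real.log (Z p.1 p.2))
    let D : (X × X → ℝ) → ℝ := fun P => ∑ p : X × X, P p * Real.log (P p / (Q p.1 * Q p.2))
    let Ex : ℝ → ℝ := fun ρ => -ρ * Real.log (∑ p : X × X, Q p.1 * Q p.2 * Z p.1 p.2 ^ (1 / ρ))
    sInf {v | ∃ P : X × X → ℝ, ((∀ p, 0 ≤ P p) ∧ ∑ p : X × X, P p = 1) ∧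
        D P ≤ 2 * Rh ∧ v = Δhalf P} =
      sSup {v | ∃ ρ : ℝ, 0 < ρ ∧ v = Ex ρ - 2 * ρ * Rh} := by
  intro Z Δhalf D Ex
  have hw : ∀ p : X × X, 0 < Q p.1 * Q p.2 := fun p => mul_pos (hQpos p.1) (hQpos p.2)
  have hw1 : ∑ p : X × X, Q p.1 * Q p.2 = 1 := by
    rw [Fintype.sum_prod_type]
    simp only [← Finset.mul_sum, hQsum, mul_one]
  have hZ0 : ∀ p : X × X, 0 < Z p.1 p.2 := by
    intro p
    exact Finset.sum_pos
      (fun y _ => Real.sqrt_pos.mpr (mul_pos (hWpos p.1 y) (hWpos p.2 y)))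
      Finset.univ_nonempty
  have hZ1 : ∀ p : X × X, Z p.1 p.2 ≤ 1 := by
    intro p
    have key : ∀ y, Real.sqrt (W p.1 y * W p.2 y) ≤ (W p.1 y + W p.2 y) / 2 := by
      intro y
      rw [Real.sqrt_mul (hWpos p.1 y).le]
      have h2 := two_mul_le_add_sq (Real.sqrt (W p.1 y)) (Real.sqrt (W p.2 y))
      rw [Real.sq_sqrt (hWpos p.1 y).le, Real.sq_sqrt (hWpos p.2 y).le] at h2
      linarith
    calc Z p.1 p.2 ≤ ∑ y, (W p.1 y + W p.2 y) / 2 := Finset.sum_le_sum (fun y _ => key y)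
      _ = 1 := by
        rw [← Finset.sum_div, Finset.sum_add_distrib, hWsum, hWsum]
        norm_num
  have h := duality (α := X × X) (fun p => Q p.1 * Q p.2)
    (fun p => ∑ y, Real.sqrt (W p.1 y * W p.2 y)) hw hw1 hZ0 hZ1 (2 * Rh)
    (by linarith)
  have hset : {v | ∃ ρ : ℝ, 0 < ρ ∧ v = Ex ρ - 2 * ρ * Rh} =
      {v | ∃ ρ : ℝ, 0 < ρ ∧
        v = -ρ * Real.log (∑ p : X × X, Q p.1 * Q p.2 *
          (∑ y, Real.sqrt (W p.1 y * W p.2 y)) ^ (1/ρ)) - ρ * (2 * Rh)} := by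
    ext v
    constructor
    · rintro ⟨ρ, hρ, rfl⟩
      exact ⟨ρ, hρ, by show Ex ρ - 2 * ρ * Rh = _; ring⟩
    · rintro ⟨ρ, hρ, rfl⟩
      exact ⟨ρ, hρ, by show _ = Ex ρ - 2 * ρ * Rh; ring⟩
  rw [hset]
  exact h
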